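/- Let 1 ≤ p ≤ ∞, 1 ≤ q < ∞, let φ : [0,∞) → ℝ be a weight with lim_{r→∞} r·φ'(r) = ∞, let δ > 1, and set ψ(r) = φ(r/δ). Then there exists a constant C > 0 such that for every t ≥ δ and every entire function f, ‖D_t f‖_{p,q,ψ} ≤ C ‖f‖_{p,q,φ}, where D_t f(z) = f(z/t); i.e., the dilations D_t : F_φ^{p,q} → F_ψ^{p,q} are bounded uniformly in t ≥ δ. -/

import Mathlib

open MeasureTheory Set Filter
open scoped ENNReal Topology

/-- The integral mean `M_p(f,r)` over the circle of radius `r`, with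
`M_∞(f,r) = sup_{0≤θ≤2π} |f(r e^{iθ})|`. -/
noncomputable def Mp (p : ℝ≥0∞) (f : ℂ → ℂ) (r : ℝ) : ℝ :=
  if p = ⊤ then
    sSup ((fun θ : ℝ => ‖f ((r:ℂ) * Complex.exp ((θ:ℂ) * Complex.I))‖) ''
      Set.Icc 0 (2 * Real.pi))
  else
    ((1 / (2 * Real.pi)) *
        ∫ θ in (0:ℝ)..(2 * Real.pi),
          ‖f ((r:ℂ) * Complex.exp ((θ:ℂ) * Complex.I))‖ ^ p.toReal) ^
      (1 / p.toReal)

/-- The weighted mixed norm `‖f‖_{p,q,φ}` (with values in `[0,∞]`), for `1 ≤ q < ∞`. -/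
noncomputable def mixedNorm (p : ℝ≥0∞) (q : ℝ) (φ : ℝ → ℝ) (f : ℂ → ℂ) : ℝ≥0∞ :=
  (∫⁻ r in Set.Ioi (0:ℝ), ENNReal.ofReal (Mp p f r ^ q * Real.exp (-q * φ r) * r)) ^ (1 / q)

namespace Stmt15Aux

open Complex intervalIntegral

/-- Poisson kernel at radius `b`, point `w`. -/
noncomputable def pk (b : ℝ) (w : ℂ) (θ : ℝ) : ℝ :=
  (b ^ 2 - Complex.normSq w) / Complex.normSq ((b:ℂ) * Complex.exp ((θ:ℂ) * Complex.I) - w)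

/-- Poisson kernel in polar form. -/
noncomputable def pker (a b α ψ : ℝ) : ℝ :=
  (b ^ 2 - a ^ 2) / (b ^ 2 + a ^ 2 - 2 * a * b * Real.cos (ψ - α))

lemma normSq_circle_sub (a b α ψ : ℝ) :
    Complex.normSq ((b:ℂ) * Complex.exp ((ψ:ℂ) * Complex.I)
        - (a:ℂ) * Complex.exp ((α:ℂ) * Complex.I))
      = b ^ 2 + a ^ 2 - 2 * a * b * Real.cos (ψ - α) := by
  have e1 := Real.sin_sq_add_cos_sq ψ
  have e2 := Real.sin_sq_add_cos_sq α
  simp only [Complex.normSq_apply, Complex.sub_re, Complex.sub_im, Complex.mul_re,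
    Complex.mul_im, Complex.ofReal_re, Complex.ofReal_im, Complex.exp_ofReal_mul_I_re,
    Complex.exp_ofReal_mul_I_im, zero_mul, sub_zero, zero_add, Real.cos_sub]
  ring_nf
  nlinarith [e1, e2]

lemma pk_circle (a b α ψ : ℝ) :
    pk b ((a:ℂ) * Complex.exp ((α:ℂ) * Complex.I)) ψ = pker a b α ψ := by
  unfold pk pker
  rw [normSq_circle_sub]
  congr 1
  rw [Complex.normSq_mul, ← Complex.sq_norm (Complex.exp _), Complex.norm_exp_ofReal_mul_I]
  simp [Complex.normSq_ofReal, sq]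

lemma pker_denom_pos {a b : ℝ} (ha : 0 ≤ a) (hab : a < b) (α ψ : ℝ) :
    0 < b ^ 2 + a ^ 2 - 2 * a * b * Real.cos (ψ - α) := by
  have h1 := Real.cos_le_one (ψ - α)
  have h2 : 0 < b := lt_of_le_of_lt ha hab
  nlinarith [mul_nonneg ha h2.le, sq_nonneg (b - a)]

lemma pker_nonneg {a b : ℝ} (ha : 0 ≤ a) (hab : a < b) (α ψ : ℝ) :
    0 ≤ pker a b α ψ := by
  apply div_nonneg _ (pker_denom_pos ha hab α ψ).le
  nlinarith

lemma pker_symm (a b α ψ : ℝ) : pker a b α ψ = pker a b ψ α := by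
  unfold pker
  rw [show Real.cos (ψ - α) = Real.cos (α - ψ) by rw [← Real.cos_neg, neg_sub]]

lemma pk_nonneg {b : ℝ} (hb : 0 < b) {w : ℂ} (hw : ‖w‖ < b) (θ : ℝ) :
    0 ≤ pk b w θ := by
  apply div_nonneg _ (Complex.normSq_nonneg _)
  rw [← Complex.sq_norm]
  nlinarith [norm_nonneg w]

lemma kernel_id {b : ℝ} (hb : 0 < b) {w z : ℂ} (hw0 : w ≠ 0) (hwb : ‖w‖ < b)
    (hzb : ‖z‖ = b) :
    z * ((z - w)⁻¹ - (z - (b:ℂ)^2 / (starRingEnd ℂ) w)⁻¹)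
      = (((b^2 - Complex.normSq w) / Complex.normSq (z - w) : ℝ) : ℂ) := by
  have hcw : (starRingEnd ℂ) w ≠ 0 := by
    rw [starRingEnd_apply, star_ne_zero]
    exact hw0
  have hzw : z - w ≠ 0 := by
    apply sub_ne_zero.2
    intro h
    rw [h] at hzb
    exact absurd hzb (ne_of_lt hwb)
  have hzz : z * (starRingEnd ℂ) z = (b:ℂ)^2 := by
    rw [Complex.mul_conj, ← Complex.sq_norm, hzb]
    push_cast
    ring
  have hz0 : z ≠ 0 := by
    intro h
    rw [h, norm_zero] at hzb
    linarith
  have hcz0 : (starRingEnd ℂ) z ≠ 0 := by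
    rw [starRingEnd_apply, star_ne_zero]
    exact hz0
  have hvu : (starRingEnd ℂ) z - (starRingEnd ℂ) w ≠ 0 := by
    rw [← map_sub, starRingEnd_apply, star_ne_zero]
    exact hzw
  have huv : (starRingEnd ℂ) w - (starRingEnd ℂ) z ≠ 0 := by
    intro h
    apply hvu
    linear_combination -h
  have key : z - (b:ℂ)^2 / (starRingEnd ℂ) w
      = z * (((starRingEnd ℂ) w - (starRingEnd ℂ) z)) / (starRingEnd ℂ) w := by
    rw [eq_div_iff hcw, sub_mul, div_mul_cancel₀ _ hcw]
    linear_combination hzz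
  have h2inv : (z - (b:ℂ)^2 / (starRingEnd ℂ) w)⁻¹
      = (starRingEnd ℂ) w / (z * ((starRingEnd ℂ) w - (starRingEnd ℂ) z)) := by
    rw [key, inv_div]
  rw [Complex.ofReal_div, Complex.ofReal_sub, ← Complex.mul_conj w, ← Complex.mul_conj (z - w),
    map_sub, h2inv]
  push_cast
  rw [← hzz]
  have hmul : z * ((starRingEnd ℂ) w - (starRingEnd ℂ) z) ≠ 0 := mul_ne_zero hz0 huv
  field_simp
  ring

lemma poisson_rep {f : ℂ → ℂ} (hf : Differentiable ℂ f) {b : ℝ} (hb : 0 < b)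
    {w : ℂ} (hw0 : w ≠ 0) (hw : ‖w‖ < b) :
    f w = ((2 * Real.pi : ℝ) : ℂ)⁻¹ *
      ∫ θ in (0:ℝ)..(2 * Real.pi),
        ((pk b w θ : ℝ) : ℂ) * f ((b:ℂ) * Complex.exp ((θ:ℂ) * Complex.I)) := by
  classical
  set w' : ℂ := (b:ℂ)^2 / (starRingEnd ℂ) w with hw'def
  have hcw : (starRingEnd ℂ) w ≠ 0 := by simpa using hw0
  have hwmem : w ∈ Metric.ball (0:ℂ) b := by
    simpa [Metric.mem_ball, Complex.dist_eq] using hw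
  have h1 : (∮ z in C(0, b), (z - w)⁻¹ • f z) = (2 * Real.pi * Complex.I : ℂ) • f w :=
    (hf.diffContOnCl).circleIntegral_sub_inv_smul hwmem
  have hw'abs : b < ‖w'‖ := by
    rw [hw'def, norm_div, norm_pow, Complex.norm_real, Real.norm_eq_abs, _root_.abs_of_pos hb, Complex.norm_conj]
    rw [lt_div_iff₀ (norm_pos_iff.mpr hw0)]
    nlinarith [norm_pos_iff.mpr hw0]
  have hzw' : ∀ z : ℂ, ‖z‖ ≤ b → z - w' ≠ 0 := by
    intro z hz
    apply sub_ne_zero.2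
    intro h
    rw [h] at hz
    linarith
  have h2 : (∮ z in C(0, b), (z - w')⁻¹ • f z) = 0 := by
    apply Complex.circleIntegral_eq_zero_of_differentiable_on_off_countable hb.le countable_empty
    · apply ContinuousOn.smul (f := fun z => (z - w')⁻¹) (g := f)
      · apply ContinuousOn.inv₀ (continuousOn_id.sub continuousOn_const)
        intro z hz
        apply hzw' z
        simpa [Complex.dist_eq] using hz
      · exact hf.continuous.continuousOn
    · intro z hz
      apply DifferentiableAt.smul (c := fun z => (z - w')⁻¹) (f := f)
      · have hzlt : ‖z‖ < b := by simpa [Complex.dist_eq] using hz.1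
        exact (differentiableAt_id.sub_const w').inv (hzw' z hzlt.le)
      · exact hf _
  have habs : ∀ θ : ℝ, ‖(b:ℂ) * Complex.exp ((θ:ℂ) * Complex.I)‖ = b := by
    intro θ
    rw [norm_mul, Complex.norm_exp_ofReal_mul_I, mul_one, Complex.norm_real, Real.norm_eq_abs, _root_.abs_of_pos hb]
  have hne : ∀ θ : ℝ, (b:ℂ) * Complex.exp ((θ:ℂ) * Complex.I) - w ≠ 0 := by
    intro θ
    apply sub_ne_zero.2
    intro h
    rw [← h] at hw
    rw [habs θ] at hw
    exact lt_irrefl _ hw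
  have hne' : ∀ θ : ℝ, (b:ℂ) * Complex.exp ((θ:ℂ) * Complex.I) - w' ≠ 0 := fun θ =>
    hzw' _ (le_of_eq (habs θ))
  have hccirc : Continuous fun θ : ℝ => (b:ℂ) * Complex.exp ((θ:ℂ) * Complex.I) := by
    continuity
  have e1 : (∫ θ in (0:ℝ)..(2*Real.pi),
        ((b:ℂ) * Complex.exp ((θ:ℂ) * Complex.I) * Complex.I) *
          (((b:ℂ) * Complex.exp ((θ:ℂ) * Complex.I) - w)⁻¹ *
            f ((b:ℂ) * Complex.exp ((θ:ℂ) * Complex.I))))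
      = (2 * Real.pi * Complex.I : ℂ) * f w := by
    rw [smul_eq_mul] at h1
    rw [← h1]
    simp [circleIntegral, deriv_circleMap, circleMap, smul_eq_mul]
  have e2 : (∫ θ in (0:ℝ)..(2*Real.pi),
        ((b:ℂ) * Complex.exp ((θ:ℂ) * Complex.I) * Complex.I) *
          (((b:ℂ) * Complex.exp ((θ:ℂ) * Complex.I) - w')⁻¹ *
            f ((b:ℂ) * Complex.exp ((θ:ℂ) * Complex.I))))
      = 0 := by
    rw [← h2]
    simp [circleIntegral, deriv_circleMap, circleMap, smul_eq_mul]
  have hcont1 : Continuous fun θ : ℝ =>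
      ((b:ℂ) * Complex.exp ((θ:ℂ) * Complex.I) * Complex.I) *
        (((b:ℂ) * Complex.exp ((θ:ℂ) * Complex.I) - w)⁻¹ *
          f ((b:ℂ) * Complex.exp ((θ:ℂ) * Complex.I))) :=
    ((hccirc.mul continuous_const).mul
      (((hccirc.sub continuous_const).inv₀ hne).mul (hf.continuous.comp hccirc)))
  have hcont2 : Continuous fun θ : ℝ =>
      ((b:ℂ) * Complex.exp ((θ:ℂ) * Complex.I) * Complex.I) *
        (((b:ℂ) * Complex.exp ((θ:ℂ) * Complex.I) - w')⁻¹ *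
          f ((b:ℂ) * Complex.exp ((θ:ℂ) * Complex.I))) :=
    ((hccirc.mul continuous_const).mul
      (((hccirc.sub continuous_const).inv₀ hne').mul (hf.continuous.comp hccirc)))
  have e3 : (∫ θ in (0:ℝ)..(2*Real.pi),
        (((b:ℂ) * Complex.exp ((θ:ℂ) * Complex.I) * Complex.I) *
          (((b:ℂ) * Complex.exp ((θ:ℂ) * Complex.I) - w)⁻¹ *
            f ((b:ℂ) * Complex.exp ((θ:ℂ) * Complex.I)))
        - ((b:ℂ) * Complex.exp ((θ:ℂ) * Complex.I) * Complex.I) *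
          (((b:ℂ) * Complex.exp ((θ:ℂ) * Complex.I) - w')⁻¹ *
            f ((b:ℂ) * Complex.exp ((θ:ℂ) * Complex.I)))))
      = (2 * Real.pi * Complex.I : ℂ) * f w := by
    rw [intervalIntegral.integral_sub (hcont1.intervalIntegrable _ _)
      (hcont2.intervalIntegrable _ _), e1, e2, sub_zero]
  have e4 : ∀ θ : ℝ,
      (((b:ℂ) * Complex.exp ((θ:ℂ) * Complex.I) * Complex.I) *
          (((b:ℂ) * Complex.exp ((θ:ℂ) * Complex.I) - w)⁻¹ *
            f ((b:ℂ) * Complex.exp ((θ:ℂ) * Complex.I)))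
        - ((b:ℂ) * Complex.exp ((θ:ℂ) * Complex.I) * Complex.I) *
          (((b:ℂ) * Complex.exp ((θ:ℂ) * Complex.I) - w')⁻¹ *
            f ((b:ℂ) * Complex.exp ((θ:ℂ) * Complex.I))))
      = Complex.I * (((pk b w θ : ℝ) : ℂ) * f ((b:ℂ) * Complex.exp ((θ:ℂ) * Complex.I))) := by
    intro θ
    have hk := kernel_id hb hw0 hw (habs θ)
    have : ((pk b w θ : ℝ) : ℂ)
        = ((b:ℂ) * Complex.exp ((θ:ℂ) * Complex.I)) *
            ((((b:ℂ) * Complex.exp ((θ:ℂ) * Complex.I)) - w)⁻¹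
              - (((b:ℂ) * Complex.exp ((θ:ℂ) * Complex.I)) - w')⁻¹) := by
      rw [hk]
      rfl
    rw [this]
    ring
  have e5 : (∫ θ in (0:ℝ)..(2*Real.pi),
        Complex.I * (((pk b w θ : ℝ) : ℂ) * f ((b:ℂ) * Complex.exp ((θ:ℂ) * Complex.I))))
      = (2 * Real.pi * Complex.I : ℂ) * f w := by
    rw [← e3]
    apply intervalIntegral.integral_congr
    intro θ _
    exact (e4 θ).symm
  rw [intervalIntegral.integral_const_mul] at e5
  have e6 : (∫ θ in (0:ℝ)..(2*Real.pi),
      ((pk b w θ : ℝ) : ℂ) * f ((b:ℂ) * Complex.exp ((θ:ℂ) * Complex.I)))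
      = (2 * Real.pi : ℂ) * f w := by
    apply mul_left_cancel₀ Complex.I_ne_zero
    rw [e5]
    ring
  rw [e6]
  have h2pi : ((2 * Real.pi : ℝ) : ℂ) ≠ 0 := by
    rw [Complex.ofReal_ne_zero]
    positivity
  push_cast
  push_cast at h2pi
  field_simp

lemma poisson_one {b : ℝ} (hb : 0 < b) {w : ℂ} (hw0 : w ≠ 0) (hw : ‖w‖ < b) :
    ∫ θ in (0:ℝ)..(2 * Real.pi), pk b w θ = 2 * Real.pi := by
  have h := poisson_rep (f := fun _ => (1:ℂ)) (differentiable_const 1) hb hw0 hw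
  simp only [mul_one] at h
  rw [intervalIntegral.integral_ofReal] at h
  have h2pi : ((2 * Real.pi : ℝ) : ℂ) ≠ 0 := by
    rw [Complex.ofReal_ne_zero]
    positivity
  field_simp at h
  have h' : (∫ θ in (0:ℝ)..(2*Real.pi), pk b w θ) / (2*Real.pi) = 1 := by
    rw [div_eq_one_iff_eq (by positivity)]
    exact_mod_cast h.symm
  have hpi : (2*Real.pi : ℝ) ≠ 0 := by positivity
  field_simp at h'
  linarith

lemma poisson_abs {f : ℂ → ℂ} (hf : Differentiable ℂ f) {b : ℝ} (hb : 0 < b)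
    {w : ℂ} (hw0 : w ≠ 0) (hw : ‖w‖ < b) :
    ‖f w‖ ≤ (2 * Real.pi)⁻¹ *
      ∫ θ in (0:ℝ)..(2 * Real.pi),
        pk b w θ * ‖f ((b:ℂ) * Complex.exp ((θ:ℂ) * Complex.I))‖ := by
  conv_lhs => rw [poisson_rep hf hb hw0 hw]
  rw [norm_mul, norm_inv, Complex.norm_real, Real.norm_eq_abs, _root_.abs_of_pos (by positivity : (0:ℝ) < 2*Real.pi)]
  apply mul_le_mul_of_nonneg_left _ (by positivity)
  calc ‖∫ θ in (0:ℝ)..(2*Real.pi),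
        ((pk b w θ : ℝ) : ℂ) * f ((b:ℂ) * Complex.exp ((θ:ℂ) * Complex.I))‖
      ≤ ∫ θ in (0:ℝ)..(2*Real.pi),
        ‖((pk b w θ : ℝ) : ℂ) * f ((b:ℂ) * Complex.exp ((θ:ℂ) * Complex.I))‖ := by
        exact intervalIntegral.norm_integral_le_integral_norm (by positivity)
    _ = ∫ θ in (0:ℝ)..(2*Real.pi),
        pk b w θ * ‖f ((b:ℂ) * Complex.exp ((θ:ℂ) * Complex.I))‖ := by
        apply intervalIntegral.integral_congr
        intro θ _
        show ‖((pk b w θ : ℝ) : ℂ) * f ((b:ℂ) * Complex.exp ((θ:ℂ) * Complex.I))‖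
          = pk b w θ * ‖f ((b:ℂ) * Complex.exp ((θ:ℂ) * Complex.I))‖
        rw [norm_mul, Complex.norm_real, Real.norm_eq_abs,
          _root_.abs_of_nonneg (pk_nonneg hb hw θ)]

lemma point_pow_bound {f : ℂ → ℂ} (hf : Differentiable ℂ f) {a b : ℝ} (ha : 0 < a)
    (hab : a < b) {pp : ℝ} (hpp : 1 ≤ pp) (α : ℝ) :
    ‖f ((a:ℂ) * Complex.exp ((α:ℂ) * Complex.I))‖ ^ pp ≤
      (2 * Real.pi)⁻¹ *
        ∫ ψ in (0:ℝ)..(2 * Real.pi),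
          pker a b α ψ * ‖f ((b:ℂ) * Complex.exp ((ψ:ℂ) * Complex.I))‖ ^ pp := by
  have hb : 0 < b := ha.trans hab
  have h2π : (0:ℝ) ≤ 2 * Real.pi := by positivity
  have h2πpos : (0:ℝ) < 2 * Real.pi := by positivity
  set w : ℂ := (a:ℂ) * Complex.exp ((α:ℂ) * Complex.I) with hwdef
  have hw0 : w ≠ 0 := by
    rw [hwdef]
    exact mul_ne_zero (by exact_mod_cast ha.ne') (Complex.exp_ne_zero _)
  have hwabs : ‖w‖ = a := by
    rw [hwdef, norm_mul, Complex.norm_exp_ofReal_mul_I, mul_one, Complex.norm_real, Real.norm_eq_abs,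
      _root_.abs_of_pos ha]
  have hwlt : ‖w‖ < b := by rw [hwabs]; exact hab
  set Fb : ℝ → ℝ := fun ψ => ‖f ((b:ℂ) * Complex.exp ((ψ:ℂ) * Complex.I))‖ with hFbdef
  have hFb0 : ∀ ψ, 0 ≤ Fb ψ := fun ψ => norm_nonneg _
  have hpk : ∀ ψ : ℝ, pk b w ψ = pker a b α ψ := fun ψ => by rw [hwdef, pk_circle]
  have habs' : ‖f w‖ ≤ (2 * Real.pi)⁻¹ *
      ∫ ψ in (0:ℝ)..(2 * Real.pi), pker a b α ψ * Fb ψ := by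
    refine (poisson_abs hf hb hw0 hwlt).trans (le_of_eq ?_)
    congr 1
    apply intervalIntegral.integral_congr
    intro ψ _
    show pk b w ψ * Fb ψ = pker a b α ψ * Fb ψ
    rw [hpk]
  have hP_pos : ∀ ψ, 0 < pker a b α ψ := fun ψ => div_pos (by nlinarith)
    (pker_denom_pos ha.le hab α ψ)
  have hPc : Continuous fun ψ => pker a b α ψ := by
    apply continuous_const.div (by continuity)
    intro ψ
    exact (pker_denom_pos ha.le hab α ψ).ne'
  have hFc : Continuous Fb := continuous_norm.comp (hf.continuous.comp (by continuity))
  rcases eq_or_lt_of_le hpp with h1 | h1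
  · rw [← h1]
    simp only [Real.rpow_one]
    exact habs'
  -- 1 < pp
  set q' : ℝ := Real.conjExponent pp with hq'def
  have hpq : pp.HolderConjugate q' := Real.HolderConjugate.conjExponent h1
  have hppne : pp ≠ 0 := hpq.pos.ne'
  have hq'ne : q' ≠ 0 := hpq.symm.pos.ne'
  set μ := volume.restrict (Set.Ioc (0:ℝ) (2 * Real.pi)) with hμdef
  have hfin : IsFiniteMeasure μ := by
    constructor
    rw [hμdef, Measure.restrict_apply_univ]
    exact measure_Ioc_lt_top
  set u : ℝ → ℝ := fun ψ => pker a b α ψ ^ (1/pp) * Fb ψ with hudef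
  set v : ℝ → ℝ := fun ψ => pker a b α ψ ^ (1/q') with hvdef
  have huc : Continuous u := (hPc.rpow_const (fun ψ => Or.inl (hP_pos ψ).ne')).mul hFc
  have hvc : Continuous v := hPc.rpow_const (fun ψ => Or.inl (hP_pos ψ).ne')
  have hmem : ∀ (g : ℝ → ℝ), Continuous g → ∀ e : ℝ≥0∞, MemLp g e μ := by
    intro g hg e
    obtain ⟨C, hC⟩ := (isCompact_Icc (a := (0:ℝ))
      (b := 2 * Real.pi)).exists_bound_of_continuousOn hg.continuousOn
    apply MemLp.of_bound hg.aestronglyMeasurable C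
    rw [hμdef]
    filter_upwards [self_mem_ae_restrict measurableSet_Ioc] with x hx
    exact hC x (Set.Ioc_subset_Icc_self hx)
  have hold := MeasureTheory.integral_mul_le_Lp_mul_Lq_of_nonneg hpq
    (Eventually.of_forall fun ψ => mul_nonneg (Real.rpow_nonneg (hP_pos ψ).le _) (hFb0 ψ))
    (Eventually.of_forall fun ψ => Real.rpow_nonneg (hP_pos ψ).le _)
    (hmem u huc _) (hmem v hvc _)
  have hone : (1:ℝ)/pp + 1/q' = 1 := by
    rw [one_div, one_div]
    exact hpq.inv_add_inv_eq_one
  have hI1 : ∫ ψ, u ψ * v ψ ∂μ = ∫ ψ in (0:ℝ)..(2 * Real.pi), pker a b α ψ * Fb ψ := by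
    rw [intervalIntegral.integral_of_le h2π]
    apply MeasureTheory.integral_congr_ae
    apply Eventually.of_forall
    intro ψ
    rw [hudef, hvdef]
    simp only
    rw [mul_right_comm, ← Real.rpow_add (hP_pos ψ), hone, Real.rpow_one]
  have hI2 : ∫ ψ, u ψ ^ pp ∂μ = ∫ ψ in (0:ℝ)..(2 * Real.pi), pker a b α ψ * Fb ψ ^ pp := by
    rw [intervalIntegral.integral_of_le h2π]
    apply MeasureTheory.integral_congr_ae
    apply Eventually.of_forall
    intro ψ
    rw [hudef]
    simp only
    rw [Real.mul_rpow (Real.rpow_nonneg (hP_pos ψ).le _) (hFb0 ψ),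
      ← Real.rpow_mul (hP_pos ψ).le, one_div, inv_mul_cancel₀ hppne, Real.rpow_one]
  have hI3 : ∫ ψ, v ψ ^ q' ∂μ = 2 * Real.pi := by
    have e1 : ∫ ψ, v ψ ^ q' ∂μ = ∫ ψ in (0:ℝ)..(2 * Real.pi), pk b w ψ := by
      rw [intervalIntegral.integral_of_le h2π]
      apply MeasureTheory.integral_congr_ae
      apply Eventually.of_forall
      intro ψ
      rw [hvdef]
      simp only
      rw [← Real.rpow_mul (hP_pos ψ).le, one_div, inv_mul_cancel₀ hq'ne, Real.rpow_one, hpk]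
    rw [e1, poisson_one hb hw0 hwlt]
  rw [hI1, hI2, hI3] at hold
  -- hold : ∫ pker * Fb ≤ (∫ pker * Fb^pp)^(1/pp) * (2π)^(1/q')
  set A : ℝ := ∫ ψ in (0:ℝ)..(2 * Real.pi), pker a b α ψ * Fb ψ ^ pp with hAdef
  have hA0 : 0 ≤ A := by
    rw [hAdef]
    apply intervalIntegral.integral_nonneg h2π
    intro ψ _
    exact mul_nonneg (hP_pos ψ).le (Real.rpow_nonneg (hFb0 ψ) _)
  have hq'exp : 1/q' - 1 = -(1/pp) := by linarith
  have habs2 : ‖f w‖ ≤ A ^ (1/pp) * (2 * Real.pi) ^ (1/q' - 1 : ℝ) := by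
    calc ‖f w‖ ≤ (2 * Real.pi)⁻¹ * ∫ ψ in (0:ℝ)..(2 * Real.pi),
          pker a b α ψ * Fb ψ := habs'
      _ ≤ (2 * Real.pi)⁻¹ * (A ^ (1/pp) * (2 * Real.pi) ^ (1/q' : ℝ)) := by
          apply mul_le_mul_of_nonneg_left hold (by positivity)
      _ = A ^ (1/pp) * (2 * Real.pi) ^ (1/q' - 1 : ℝ) := by
          rw [sub_eq_add_neg, Real.rpow_add h2πpos, Real.rpow_neg_one]
          ring
  calc ‖f w‖ ^ pp ≤ (A ^ (1/pp) * (2 * Real.pi) ^ (1/q' - 1 : ℝ)) ^ pp :=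
        Real.rpow_le_rpow (norm_nonneg _) habs2 hpq.nonneg
    _ = A * (2 * Real.pi)⁻¹ := by
        rw [Real.mul_rpow (Real.rpow_nonneg hA0 _) (Real.rpow_nonneg h2π _),
          ← Real.rpow_mul hA0, ← Real.rpow_mul h2π, one_div, inv_mul_cancel₀ hppne,
          Real.rpow_one, hq'exp]
        rw [show -(1/pp) * pp = -1 by field_simp]
        rw [Real.rpow_neg_one]
    _ = (2 * Real.pi)⁻¹ * A := by ring

lemma intpow_mono {f : ℂ → ℂ} (hf : Differentiable ℂ f) {a b : ℝ} (ha : 0 < a)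
    (hab : a < b) {pp : ℝ} (hpp : 1 ≤ pp) :
    (∫ α in (0:ℝ)..(2 * Real.pi),
        ‖f ((a:ℂ) * Complex.exp ((α:ℂ) * Complex.I))‖ ^ pp) ≤
      ∫ ψ in (0:ℝ)..(2 * Real.pi),
        ‖f ((b:ℂ) * Complex.exp ((ψ:ℂ) * Complex.I))‖ ^ pp := by
  have hb : 0 < b := ha.trans hab
  have h2π : (0:ℝ) ≤ 2 * Real.pi := by positivity
  have hppnn : (0:ℝ) ≤ pp := le_trans zero_le_one hpp
  set Fa : ℝ → ℝ := fun α => ‖f ((a:ℂ) * Complex.exp ((α:ℂ) * Complex.I))‖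
    with hFadef
  set Fb : ℝ → ℝ := fun ψ => ‖f ((b:ℂ) * Complex.exp ((ψ:ℂ) * Complex.I))‖
    with hFbdef
  set G : ℝ → ℝ → ℝ := fun α ψ => pker a b α ψ * Fb ψ ^ pp with hGdef
  have hFbc : Continuous Fb :=
    continuous_norm.comp (hf.continuous.comp (by continuity))
  have hFac : Continuous Fa :=
    continuous_norm.comp (hf.continuous.comp (by continuity))
  have hGc : Continuous (Function.uncurry G) := by
    apply Continuous.mul
    · apply continuous_const.div
      · fun_prop
      · intro x
        exact (pker_denom_pos ha.le hab x.1 x.2).ne'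
    · exact (hFbc.comp continuous_snd).rpow_const (fun x => Or.inr hppnn)
  set μ := volume.restrict (Set.Ioc (0:ℝ) (2 * Real.pi)) with hμdef
  have hGint : Integrable (Function.uncurry G) (μ.prod μ) := by
    rw [hμdef, Measure.prod_restrict, ← Measure.volume_eq_prod]
    exact (hGc.continuousOn.integrableOn_compact
      (isCompact_Icc.prod isCompact_Icc)).mono_set
      (Set.prod_mono Set.Ioc_subset_Icc_self Set.Ioc_subset_Icc_self)
  have key : ∀ α ∈ Set.Icc (0:ℝ) (2 * Real.pi),
      Fa α ^ pp ≤ (2 * Real.pi)⁻¹ * ∫ ψ in (0:ℝ)..(2 * Real.pi), G α ψ := by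
    intro α _
    exact point_pow_bound hf ha hab hpp α
  have hmid : (∫ α in (0:ℝ)..(2 * Real.pi), Fa α ^ pp) ≤
      ∫ α in (0:ℝ)..(2 * Real.pi), (2 * Real.pi)⁻¹ * ∫ ψ in (0:ℝ)..(2 * Real.pi), G α ψ := by
    apply intervalIntegral.integral_mono_on h2π
    · exact (hFac.rpow_const (fun x => Or.inr hppnn)).intervalIntegrable _ _
    · apply IntervalIntegrable.const_mul
      rw [intervalIntegrable_iff, Set.uIoc_of_le h2π]
      have := hGint.integral_prod_left
      apply Integrable.congr this
      apply Eventually.of_forall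
      intro α
      simp only [Function.uncurry_apply_pair]
      rw [intervalIntegral.integral_of_le h2π]
    · exact key
  refine hmid.trans (le_of_eq ?_)
  have hswap : (∫ α, ∫ ψ, G α ψ ∂μ ∂μ) = ∫ ψ, ∫ α, G α ψ ∂μ ∂μ :=
    integral_integral_swap hGint
  have hinner : ∀ ψ : ℝ, (∫ α, G α ψ ∂μ) = Fb ψ ^ pp * (2 * Real.pi) := by
    intro ψ
    have hw0 : ((a:ℂ) * Complex.exp ((ψ:ℂ) * Complex.I)) ≠ 0 :=
      mul_ne_zero (by exact_mod_cast ha.ne') (Complex.exp_ne_zero _)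
    have hwlt : ‖(a:ℂ) * Complex.exp ((ψ:ℂ) * Complex.I)‖ < b := by
      rw [norm_mul, Complex.norm_exp_ofReal_mul_I, mul_one, Complex.norm_real, Real.norm_eq_abs,
        _root_.abs_of_pos ha]
      exact hab
    have e1 : (∫ α, G α ψ ∂μ) = (∫ α, pker a b α ψ ∂μ) * Fb ψ ^ pp := by
      rw [hGdef, ← MeasureTheory.integral_mul_const]
    have e2 : (∫ α, pker a b α ψ ∂μ) = 2 * Real.pi := by
      have e3 : (∫ α, pker a b α ψ ∂μ)
          = ∫ α in (0:ℝ)..(2 * Real.pi), pk b ((a:ℂ) * Complex.exp ((ψ:ℂ) * Complex.I)) α := by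
        rw [intervalIntegral.integral_of_le h2π]
        apply MeasureTheory.integral_congr_ae
        apply Eventually.of_forall
        intro α
        rw [pk_circle, pker_symm]
      rw [e3, poisson_one hb hw0 hwlt]
    rw [e1, e2]
    ring
  calc (∫ α in (0:ℝ)..(2 * Real.pi), (2 * Real.pi)⁻¹ * ∫ ψ in (0:ℝ)..(2 * Real.pi), G α ψ)
      = (2 * Real.pi)⁻¹ * ∫ α, ∫ ψ, G α ψ ∂μ ∂μ := by
        rw [intervalIntegral.integral_const_mul]
        congr 1
        rw [intervalIntegral.integral_of_le h2π]
        apply MeasureTheory.integral_congr_ae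
        apply Eventually.of_forall
        intro α
        show (∫ ψ in (0:ℝ)..(2 * Real.pi), G α ψ) = ∫ ψ, G α ψ ∂μ
        rw [intervalIntegral.integral_of_le h2π]
    _ = (2 * Real.pi)⁻¹ * ∫ ψ, Fb ψ ^ pp * (2 * Real.pi) ∂μ := by
        rw [hswap]
        congr 1
        apply MeasureTheory.integral_congr_ae
        apply Eventually.of_forall
        intro ψ
        exact hinner ψ
    _ = ∫ ψ in (0:ℝ)..(2 * Real.pi), Fb ψ ^ pp := by
        rw [MeasureTheory.integral_mul_const, intervalIntegral.integral_of_le h2π]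
        have hπ : (2 * Real.pi : ℝ) ≠ 0 := by positivity
        field_simp
        rfl

lemma msup_mono {f : ℂ → ℂ} (hf : Differentiable ℂ f) {a b : ℝ} (ha : 0 ≤ a) (hb : 0 < b)
    (hab : a ≤ b) : Mp ⊤ f a ≤ Mp ⊤ f b := by
  unfold Mp
  simp only [if_pos rfl]
  have hcb : Continuous fun θ : ℝ =>
      ‖f ((b:ℂ) * Complex.exp ((θ:ℂ) * Complex.I))‖ :=
    continuous_norm.comp (hf.continuous.comp (by continuity))
  have hbdd : BddAbove ((fun θ : ℝ =>
      ‖f ((b:ℂ) * Complex.exp ((θ:ℂ) * Complex.I))‖) '' Set.Icc 0 (2 * Real.pi)) :=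
    (isCompact_Icc.image_of_continuousOn hcb.continuousOn).bddAbove
  have key : ∀ w : ℂ, ‖w‖ ≤ b → ‖f w‖ ≤
      sSup ((fun θ : ℝ =>
        ‖f ((b:ℂ) * Complex.exp ((θ:ℂ) * Complex.I))‖) '' Set.Icc 0 (2 * Real.pi)) := by
    intro w hwb
    have hmem : w ∈ closure (Metric.ball (0:ℂ) b) := by
      rw [closure_ball (0:ℂ) hb.ne']
      simpa [Complex.dist_eq] using hwb
    apply Complex.norm_le_of_forall_mem_frontier_norm_le Metric.isBounded_ball
      (hf.diffContOnCl) _ hmem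
    intro z hz
    rw [frontier_ball (0:ℂ) hb.ne'] at hz
    have hzb : ‖z‖ = b := by simpa [Complex.dist_eq] using hz
    have habs : (↑(‖z‖) : ℂ) * Complex.exp ((Complex.arg z : ℂ) * Complex.I) = z :=
      Complex.norm_mul_exp_arg_mul_I z
    rcases le_or_gt 0 (Complex.arg z) with h0 | h0
    · have hle : Complex.arg z ≤ 2 * Real.pi := by
        have := Complex.arg_le_pi z
        nlinarith [Real.pi_pos]
      apply le_csSup hbdd
      refine ⟨Complex.arg z, ⟨h0, hle⟩, ?_⟩
      show ‖f ((b:ℂ) * Complex.exp ((Complex.arg z : ℂ) * Complex.I))‖ = ‖f z‖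
      rw [← hzb, habs]
    · have hge : 0 ≤ Complex.arg z + 2 * Real.pi := by
        have := Complex.neg_pi_lt_arg z
        nlinarith [Real.pi_pos]
      have hle : Complex.arg z + 2 * Real.pi ≤ 2 * Real.pi := by linarith
      apply le_csSup hbdd
      refine ⟨Complex.arg z + 2 * Real.pi, ⟨hge, hle⟩, ?_⟩
      have hexp : Complex.exp ((↑(Complex.arg z + 2 * Real.pi) : ℂ) * Complex.I)
          = Complex.exp ((Complex.arg z : ℂ) * Complex.I) := by
        push_cast
        rw [add_mul, Complex.exp_add]
        simp [Complex.exp_two_pi_mul_I]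
      show ‖
        (f ((b:ℂ) * Complex.exp ((↑(Complex.arg z + 2 * Real.pi) : ℂ) * Complex.I)))‖ = ‖f z‖
      rw [hexp, ← hzb, habs]
  apply csSup_le
  · apply Set.Nonempty.image
    exact ⟨0, by constructor <;> positivity⟩
  · rintro x ⟨α, -, rfl⟩
    apply key
    rw [norm_mul, Complex.norm_exp_ofReal_mul_I, mul_one, Complex.norm_real, Real.norm_eq_abs,
      _root_.abs_of_nonneg ha]
    exact hab

lemma mp_nonneg (p : ℝ≥0∞) (f : ℂ → ℂ) (r : ℝ) : 0 ≤ Mp p f r := by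
  unfold Mp
  split
  · apply Real.sSup_nonneg
    rintro x ⟨θ, -, rfl⟩
    positivity
  · apply Real.rpow_nonneg
    apply mul_nonneg (by positivity)
    apply intervalIntegral.integral_nonneg (by positivity)
    intro θ _
    positivity

lemma mp_mono {p : ℝ≥0∞} (hp : 1 ≤ p) {f : ℂ → ℂ} (hf : Differentiable ℂ f)
    {a b : ℝ} (ha : 0 < a) (hab : a ≤ b) : Mp p f a ≤ Mp p f b := by
  rcases eq_or_lt_of_le hab with rfl | hab'
  · exact le_refl _
  by_cases hptop : p = ⊤
  · subst hptop
    exact msup_mono hf ha.le (ha.trans hab') hab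
  · unfold Mp
    rw [if_neg hptop, if_neg hptop]
    have hpp : 1 ≤ p.toReal := by
      have := ENNReal.toReal_mono hptop hp
      simpa using this
    have h1 : (0:ℝ) ≤ 1 / (2 * Real.pi) := by positivity
    apply Real.rpow_le_rpow
    · apply mul_nonneg h1
      apply intervalIntegral.integral_nonneg (by positivity)
      intro θ _
      positivity
    · exact mul_le_mul_of_nonneg_left (intpow_mono hf ha hab' hpp) h1
    · positivity

lemma mp_dilate (p : ℝ≥0∞) (f : ℂ → ℂ) {t : ℝ} (ht : t ≠ 0) (r : ℝ) :
    Mp p (fun z => f (z / (t:ℂ))) r = Mp p f (r / t) := by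
  have key : ∀ θ : ℝ, ((↑(r / t) : ℂ) * Complex.exp ((θ:ℂ) * Complex.I))
      = ((r:ℂ) * Complex.exp ((θ:ℂ) * Complex.I)) / (t:ℂ) := by
    intro θ
    push_cast
    ring
  unfold Mp
  simp only [key]

lemma lintegral_Ioi_comp_div {c : ℝ} (hc : 0 < c) (H : ℝ → ℝ≥0∞) :
    ∫⁻ x in Set.Ioi (0:ℝ), H (x / c) = ENNReal.ofReal c * ∫⁻ x in Set.Ioi (0:ℝ), H x := by
  have hc' : c⁻¹ ≠ 0 := inv_ne_zero hc.ne'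
  let e : ℝ ≃ᵐ ℝ := (Homeomorph.mulLeft₀ c⁻¹ hc').toMeasurableEquiv
  have hecoe : (⇑e : ℝ → ℝ) = fun x => c⁻¹ * x := rfl
  have hpre : (⇑e) ⁻¹' (Set.Ioi (0:ℝ)) = Set.Ioi 0 := by
    rw [hecoe]; ext x
    simp only [Set.mem_preimage, Set.mem_Ioi]
    constructor
    · intro h; nlinarith [inv_pos.2 hc]
    · intro h; exact mul_pos (inv_pos.2 hc) h
  have hmap : Measure.map (⇑e) volume = ENNReal.ofReal c • volume := by
    rw [hecoe]
    rw [show (fun x : ℝ => c⁻¹ * x) = (c⁻¹ * ·) from rfl, Real.map_volume_mul_left hc',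
      inv_inv, abs_of_pos hc]
  calc ∫⁻ x in Set.Ioi (0:ℝ), H (x / c)
      = ∫⁻ x in Set.Ioi (0:ℝ), H (e x) := by
        apply lintegral_congr; intro x
        rw [hecoe]; rw [div_eq_inv_mul]
    _ = ∫⁻ y, H y ∂(Measure.map (⇑e) (volume.restrict (Set.Ioi 0))) :=
        (MeasureTheory.lintegral_map_equiv H e).symm
    _ = ENNReal.ofReal c * ∫⁻ x in Set.Ioi (0:ℝ), H x := by
        conv_lhs => rw [← hpre, ← Measure.restrict_map e.measurable measurableSet_Ioi, hmap,
          Measure.restrict_smul]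
        rw [lintegral_smul_measure, smul_eq_mul]

end Stmt15Aux

theorem stmt15 (p : ℝ≥0∞) (hp : 1 ≤ p) (q : ℝ) (hq : 1 ≤ q)
    (φ : ℝ → ℝ) (hφ : ContDiff ℝ 1 φ) (hφpos : ∀ r ≥ (0:ℝ), 0 < φ r)
    (hφint : (∫⁻ r in Set.Ioi (0:ℝ), ENNReal.ofReal (Real.exp (-q * φ r) * r)) < ⊤)
    (hC : Tendsto (fun r => r * deriv φ r) atTop atTop)
    (δ : ℝ) (hδ : 1 < δ) :
    ∃ C > (0:ℝ), ∀ t ≥ δ, ∀ f : ℂ → ℂ, Differentiable ℂ f →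
      mixedNorm p q (fun r => φ (r / δ)) (fun z => f (z / (t:ℂ))) ≤
        ENNReal.ofReal C * mixedNorm p q φ f := by
  have hδ0 : 0 < δ := lt_trans one_pos hδ
  have hq0 : 0 < q := lt_of_lt_of_le one_pos hq
  refine ⟨(δ ^ 2) ^ (1 / q), by positivity, ?_⟩
  intro t ht f hf
  have ht0 : 0 < t := lt_of_lt_of_le hδ0 ht
  unfold mixedNorm
  set V : ℝ → ℝ≥0∞ := fun s => ENNReal.ofReal (Mp p f s ^ q * Real.exp (-q * φ s) * s) with hV
  have step1 : (∫⁻ r in Set.Ioi (0:ℝ),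
        ENNReal.ofReal (Mp p (fun z => f (z / (t:ℂ))) r ^ q * Real.exp (-q * φ (r/δ)) * r))
      ≤ ∫⁻ r in Set.Ioi (0:ℝ),
        ENNReal.ofReal (Mp p f (r/δ) ^ q * Real.exp (-q * φ (r/δ)) * r) := by
    apply lintegral_mono_ae
    filter_upwards [self_mem_ae_restrict measurableSet_Ioi] with r hr
    have hr0 : (0:ℝ) < r := hr
    apply ENNReal.ofReal_le_ofReal
    apply mul_le_mul_of_nonneg_right _ hr0.le
    apply mul_le_mul_of_nonneg_right _ (Real.exp_pos _).le
    apply Real.rpow_le_rpow (Stmt15Aux.mp_nonneg _ _ _) _ hq0.le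
    rw [Stmt15Aux.mp_dilate p f ht0.ne' r]
    apply Stmt15Aux.mp_mono hp hf (div_pos hr0 ht0)
    exact div_le_div_of_nonneg_left hr0.le hδ0 ht
  have step2 : (∫⁻ r in Set.Ioi (0:ℝ),
        ENNReal.ofReal (Mp p f (r/δ) ^ q * Real.exp (-q * φ (r/δ)) * r))
      = ENNReal.ofReal δ * (ENNReal.ofReal δ * ∫⁻ s in Set.Ioi (0:ℝ), V s) := by
    have h1 : (∫⁻ r in Set.Ioi (0:ℝ),
          ENNReal.ofReal (Mp p f (r/δ) ^ q * Real.exp (-q * φ (r/δ)) * r))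
        = ∫⁻ r in Set.Ioi (0:ℝ), (ENNReal.ofReal δ * V (r/δ)) := by
      apply lintegral_congr
      intro r
      rw [hV]
      simp only
      rw [← ENNReal.ofReal_mul hδ0.le]
      congr 1
      field_simp
    rw [h1, lintegral_const_mul' _ _ ENNReal.ofReal_ne_top,
      Stmt15Aux.lintegral_Ioi_comp_div hδ0 V]
  calc (∫⁻ r in Set.Ioi (0:ℝ),
        ENNReal.ofReal (Mp p (fun z => f (z / (t:ℂ))) r ^ q * Real.exp (-q * φ (r/δ)) * r)) ^ (1/q)
      ≤ (ENNReal.ofReal δ * (ENNReal.ofReal δ * ∫⁻ s in Set.Ioi (0:ℝ), V s)) ^ (1/q) := by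
        apply ENNReal.rpow_le_rpow (step1.trans_eq step2) (by positivity)
    _ = ENNReal.ofReal ((δ^2) ^ (1/q)) * (∫⁻ s in Set.Ioi (0:ℝ), V s) ^ (1/q) := by
        rw [← mul_assoc, ← ENNReal.ofReal_mul (by positivity : (0:ℝ) ≤ δ)]
        rw [ENNReal.mul_rpow_of_nonneg _ _ (by positivity : (0:ℝ) ≤ 1/q)]
        rw [ENNReal.ofReal_rpow_of_pos (by positivity)]
        congr 2
        ring
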